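/- Let x₁, x₂ : ℝ → ℝ be differentiable on [0,2] and u : ℝ → ℝ be continuous on [0,2], with x₁′(t) = x₂(t) and x₂′(t) = u(t) for all t ∈ [0,2], and x₁(0) = 1, x₂(0) = 1, x₁(2) = 0, x₂(2) = 0. Then ∫₀² u(t)² dt ≥ 6.5, i.e., the control energy of every admissible control is at least that of u*(t) = 3t − 3.5. -/

import Mathlib

open Set intervalIntegral

lemma ftc02 (f f' : ℝ → ℝ)
    (hf : ∀ t ∈ Set.Icc (0 : ℝ) 2, HasDerivWithinAt f (f' t) (Set.Icc (0 : ℝ) 2) t)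
    (hint : IntervalIntegrable f' MeasureTheory.volume 0 2) :
    ∫ t in (0 : ℝ)..2, f' t = f 2 - f 0 := by
  apply intervalIntegral.integral_eq_sub_of_hasDeriv_right_of_le (by norm_num)
  · exact fun t ht => (hf t ht).continuousWithinAt
  · intro t ht
    exact (hf t (Set.Ioo_subset_Icc_self ht)).mono_of_mem_nhdsWithin
      (Icc_mem_nhdsGT_of_mem ⟨ht.1.le, ht.2⟩)
  · exact hint

/-- Every admissible control of the double-integrator problem on `[0,2]` with
boundary conditions `x(0) = (1,1)`, `x(2) = (0,0)` has energy
`∫₀² u(t)² dt ≥ 6.5`, the energy of `u*(t) = 3t − 3.5`. -/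
theorem double_integrator_energy_lower_bound
    (x₁ x₂ u : ℝ → ℝ)
    (hx₁ : ∀ t ∈ Set.Icc (0 : ℝ) 2, HasDerivWithinAt x₁ (x₂ t) (Set.Icc (0 : ℝ) 2) t)
    (hx₂ : ∀ t ∈ Set.Icc (0 : ℝ) 2, HasDerivWithinAt x₂ (u t) (Set.Icc (0 : ℝ) 2) t)
    (hu : ContinuousOn u (Set.Icc (0 : ℝ) 2))
    (h10 : x₁ 0 = 1) (h20 : x₂ 0 = 1) (h1f : x₁ 2 = 0) (h2f : x₂ 2 = 0) :
    (∫ t in (0 : ℝ)..2, (u t) ^ 2) ≥ 6.5 := by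
  have huIcc : Set.uIcc (0:ℝ) 2 = Set.Icc 0 2 := Set.uIcc_of_le (by norm_num)
  have hx₂c : ContinuousOn x₂ (Set.Icc (0:ℝ) 2) :=
    fun t ht => (hx₂ t ht).continuousWithinAt
  have hui : IntervalIntegrable u MeasureTheory.volume 0 2 :=
    (hu.mono huIcc.subset).intervalIntegrable
  have hx₂i : IntervalIntegrable x₂ MeasureTheory.volume 0 2 :=
    (hx₂c.mono huIcc.subset).intervalIntegrable
  have htui : IntervalIntegrable (fun t => t * u t) MeasureTheory.volume 0 2 :=
    ((continuousOn_id.mul hu).mono huIcc.subset).intervalIntegrable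
  -- ∫ u = -1
  have I1 : ∫ t in (0:ℝ)..2, u t = -1 := by
    rw [ftc02 x₂ u hx₂ hui, h2f, h20]; norm_num
  -- ∫ x₂ = -1
  have I2 : ∫ t in (0:ℝ)..2, x₂ t = -1 := by
    rw [ftc02 x₁ x₂ hx₁ hx₂i, h1f, h10]; norm_num
  -- ∫ (x₂ + t u) = 0 via product rule
  have I3 : ∫ t in (0:ℝ)..2, (x₂ t + t * u t) = 0 := by
    have hd : ∀ t ∈ Set.Icc (0:ℝ) 2,
        HasDerivWithinAt (fun s => s * x₂ s) (x₂ t + t * u t) (Set.Icc (0:ℝ) 2) t := by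
      intro t ht
      have := (hasDerivWithinAt_id t (Set.Icc (0:ℝ) 2)).mul (hx₂ t ht)
      simpa [mul_comm, Pi.mul_def] using this
    rw [ftc02 _ _ hd (hx₂i.add htui), h2f, h20]; ring
  -- ∫ t u = 1
  have I4 : ∫ t in (0:ℝ)..2, t * u t = 1 := by
    have := intervalIntegral.integral_add hx₂i htui
    rw [I3, I2] at this
    linarith
  -- orthogonality expansion
  set c : ℝ → ℝ := fun t => 3 * t - 3.5 with hc
  have hcc : Continuous c := by fun_prop
  have hci : IntervalIntegrable (fun t => (c t)^2) MeasureTheory.volume 0 2 :=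
    ((hcc.pow 2).intervalIntegrable 0 2)
  have huci : IntervalIntegrable (fun t => u t * c t) MeasureTheory.volume 0 2 :=
    (((hu.mono huIcc.subset).mul hcc.continuousOn).intervalIntegrable)
  have hu2i : IntervalIntegrable (fun t => (u t)^2) MeasureTheory.volume 0 2 :=
    (((hu.mono huIcc.subset).pow 2).intervalIntegrable)
  -- ∫ u c = 6.5
  have Iuc : ∫ t in (0:ℝ)..2, u t * c t = 6.5 := by
    have : ∀ t, u t * c t = 3 * (t * u t) - 3.5 * u t := by
      intro t; simp [hc]; ring
    simp_rw [this]
    rw [intervalIntegral.integral_sub (htui.const_mul 3) (hui.const_mul 3.5),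
      intervalIntegral.integral_const_mul, intervalIntegral.integral_const_mul, I4, I1]
    norm_num
  -- ∫ c² = 6.5
  have Ic2 : ∫ t in (0:ℝ)..2, (c t)^2 = 6.5 := by
    have hd : ∀ t ∈ Set.Icc (0:ℝ) 2,
        HasDerivWithinAt (fun s => 3*s^3 - 10.5*s^2 + 12.25*s) ((c t)^2) (Set.Icc (0:ℝ) 2) t := by
      intro t _
      have h1 : HasDerivAt (fun s : ℝ => 3*s^3 - 10.5*s^2 + 12.25*s)
          (3*(3*t^2) - 10.5*(2*t) + 12.25*1) t := by
        have := (((hasDerivAt_pow 3 t).const_mul 3).sub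
          ((hasDerivAt_pow 2 t).const_mul 10.5)).add ((hasDerivAt_id t).const_mul 12.25)
        exact this.congr_deriv (by norm_num)
      have h2 : (3*(3*t^2) - 10.5*(2*t) + 12.25*1 : ℝ) = (c t)^2 := by
        simp [hc]; ring
      exact (h2 ▸ h1).hasDerivWithinAt
    rw [ftc02 _ _ hd hci]; norm_num
  -- nonnegativity of ∫ (u - c)²
  have hnn : 0 ≤ ∫ t in (0:ℝ)..2, (u t - c t)^2 :=
    intervalIntegral.integral_nonneg (by norm_num) (fun t _ => sq_nonneg _)
  have hexp : ∫ t in (0:ℝ)..2, (u t - c t)^2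
      = (∫ t in (0:ℝ)..2, (u t)^2) - 2 * (∫ t in (0:ℝ)..2, u t * c t)
        + (∫ t in (0:ℝ)..2, (c t)^2) := by
    have : ∀ t, (u t - c t)^2 = ((u t)^2 - 2 * (u t * c t)) + (c t)^2 := by
      intro t; ring
    simp_rw [this]
    rw [intervalIntegral.integral_add (hu2i.sub (huci.const_mul 2)) hci,
      intervalIntegral.integral_sub hu2i (huci.const_mul 2),
      intervalIntegral.integral_const_mul]
  rw [hexp, Iuc, Ic2] at hnn
  linarith
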